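/- Suppose for each s in a finite index set T (with |T| ≤ |S|^n) we have i.i.d. [0,1]-valued random variables Ω_1(s), ..., Ω_k(s) with E[Ω_j(s)] ≤ ε < α, and take k = n². If n is large enough that 1 + e² ε ≤ e^α, then P( ∃ s ∈ T : (1/k) ∑_{j=1}^k Ω_j(s) ≥ α ) ≤ |S|^n · e^{−α n²}, which tends to 0 as n → ∞. -/

import Mathlib

set_option maxHeartbeats 1000000

open MeasureTheory ProbabilityTheory Finset Real

lemma exp_two_mul_le {x : ℝ} (h0 : 0 ≤ x) (h1 : x ≤ 1) :
    Real.exp (2 * x) ≤ 1 + Real.exp 2 * x := by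
  have hc := convexOn_exp.2 (Set.mem_univ (0:ℝ)) (Set.mem_univ (2:ℝ))
    (by linarith : (0:ℝ) ≤ 1 - x) h0 (by ring)
  simp only [smul_eq_mul, mul_zero, zero_add, Real.exp_zero] at hc
  rw [mul_comm x 2] at hc
  nlinarith [hc]

lemma single_chernoff {Ω : Type} [MeasurableSpace Ω] (μ : Measure Ω)
    [IsProbabilityMeasure μ] (k : ℕ) (hk : 0 < k) (X : Fin k → Ω → ℝ)
    (hmeas : ∀ j, Measurable (X j))
    (hrange : ∀ j ω, X j ω ∈ Set.Icc (0 : ℝ) 1)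
    (hindep : iIndepFun X μ)
    (ε α : ℝ) (hα : 0 < α)
    (hE : ∀ j, ∫ ω, X j ω ∂μ ≤ ε)
    (hbern : 1 + Real.exp 2 * ε ≤ Real.exp α) :
    (μ {ω | α ≤ (1 / k : ℝ) * ∑ j, X j ω}).toReal ≤ Real.exp (-α * k) := by
  have hk' : (0:ℝ) < k := by exact_mod_cast hk
  -- integrability of exp(2 * X j)
  have hint : ∀ j, Integrable (fun ω => Real.exp (2 * X j ω)) μ := by
    intro j
    refine ⟨(((hmeas j).const_mul 2).exp).aestronglyMeasurable,
      HasFiniteIntegral.of_bounded (C := Real.exp 2) (ae_of_all _ fun ω => ?_)⟩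
    rw [Real.norm_eq_abs, abs_of_pos (Real.exp_pos _)]
    exact Real.exp_le_exp.2 (by nlinarith [(hrange j ω).2])
  have hintX : ∀ j, Integrable (X j) μ := fun j =>
    ⟨(hmeas j).aestronglyMeasurable, HasFiniteIntegral.of_bounded (C := 1)
      (ae_of_all _ fun ω => by
        rw [Real.norm_eq_abs, abs_of_nonneg (hrange j ω).1]; exact (hrange j ω).2)⟩
  -- mgf bound
  have hmgf : ∀ j, mgf (X j) μ 2 ≤ Real.exp α := by
    intro j
    have h1 : mgf (X j) μ 2 ≤ ∫ ω, (1 + Real.exp 2 * X j ω) ∂μ := by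
      refine integral_mono (hint j) ((integrable_const 1).add ((hintX j).const_mul _)) ?_
      intro ω
      exact exp_two_mul_le (hrange j ω).1 (hrange j ω).2
    have h2 : ∫ ω, (1 + Real.exp 2 * X j ω) ∂μ = 1 + Real.exp 2 * ∫ ω, X j ω ∂μ := by
      rw [integral_add (integrable_const 1) ((hintX j).const_mul _), integral_const,
        integral_const_mul]
      simp
    have h3 : Real.exp 2 * ∫ ω, X j ω ∂μ ≤ Real.exp 2 * ε :=
      mul_le_mul_of_nonneg_left (hE j) (Real.exp_pos 2).le
    linarith
  -- rewrite event
  have hset : {ω | α ≤ (1 / k : ℝ) * ∑ j, X j ω} = {ω | (k:ℝ) * α ≤ (∑ j, X j) ω} := by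
    ext ω
    simp only [Set.mem_setOf_eq, Finset.sum_apply, one_div]
    rw [inv_mul_eq_div, le_div_iff₀ hk', mul_comm α]
  rw [hset]
  have hfun : (∑ j, X j) = fun ω => ∑ j, X j ω := by
    funext ω; simp
  have hSmeas : Measurable (fun ω => ∑ j, X j ω) :=
    Finset.measurable_sum Finset.univ fun j _ => hmeas j
  have hSint : Integrable (fun ω => Real.exp (2 * (∑ j, X j) ω)) μ := by
    rw [hfun]
    refine ⟨(hSmeas.const_mul 2).exp.aestronglyMeasurable,
      HasFiniteIntegral.of_bounded (C := Real.exp (2 * k)) (ae_of_all _ fun ω => ?_)⟩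
    rw [Real.norm_eq_abs, abs_of_pos (Real.exp_pos _)]
    refine Real.exp_le_exp.2 (mul_le_mul_of_nonneg_left ?_ (by norm_num))
    calc (∑ j, X j ω) ≤ ∑ _j : Fin k, (1:ℝ) := Finset.sum_le_sum fun j _ => (hrange j ω).2
      _ = k := by simp
  calc (μ {ω | (k:ℝ) * α ≤ (∑ j, X j) ω}).toReal
      ≤ Real.exp (-2 * ((k:ℝ) * α)) * mgf (∑ j, X j) μ 2 :=
        measure_ge_le_exp_mul_mgf _ (by norm_num) hSint
    _ = Real.exp (-2 * ((k:ℝ) * α)) * ∏ j, mgf (X j) μ 2 := by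
        rw [hindep.mgf_sum hmeas]
    _ ≤ Real.exp (-2 * ((k:ℝ) * α)) * ∏ _j : Fin k, Real.exp α := by
        refine mul_le_mul_of_nonneg_left ?_ (Real.exp_pos _).le
        exact Finset.prod_le_prod (fun j _ => mgf_nonneg) (fun j _ => hmgf j)
    _ = Real.exp (-α * k) := by
        rw [Finset.prod_const, ← Real.exp_nat_mul, ← Real.exp_add]
        · congr 1
          simp [Finset.card_univ]
          ring
    _ ≤ Real.exp (-α * k) := le_refl _

/-- Core of Ahlswede's Elimination Technique: Bernstein-trick bound plus a union
bound over at most `|S|ⁿ` state sequences, with `k = n²` codes. -/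
theorem elimination_union_bound {Ω ι Salph : Type} [MeasurableSpace Ω] [Fintype Salph]
    (μ : Measure Ω) [IsProbabilityMeasure μ]
    (n : ℕ) (hn : 1 ≤ n) (k : ℕ) (hk : k = n ^ 2)
    (T : Finset ι) (hT : T.card ≤ (Fintype.card Salph) ^ n)
    (Om : ι → Fin k → Ω → ℝ) (hmeas : ∀ s j, Measurable (Om s j))
    (hrange : ∀ s j ω, Om s j ω ∈ Set.Icc (0 : ℝ) 1)
    (hindep : ∀ s, iIndepFun (Om s) μ)
    (hident : ∀ s j j', IdentDistrib (Om s j) (Om s j') μ μ)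
    (ε α : ℝ) (hα : 0 < α) (hεα : ε < α)
    (hE : ∀ s j, ∫ ω, Om s j ω ∂μ ≤ ε)
    (hbern : 1 + Real.exp 2 * ε ≤ Real.exp α) :
    (μ {ω | ∃ s ∈ T, α ≤ (1 / k : ℝ) * ∑ j, Om s j ω}).toReal
      ≤ (Fintype.card Salph : ℝ) ^ n * Real.exp (-α * n ^ 2) := by
  have hk0 : 0 < k := by rw [hk]; positivity
  have hsingle : ∀ s, (μ {ω | α ≤ (1 / k : ℝ) * ∑ j, Om s j ω}).toReal
      ≤ Real.exp (-α * k) := fun s =>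
    single_chernoff μ k hk0 (Om s) (hmeas s) (hrange s) (hindep s) ε α hα (hE s) hbern
  have hset : {ω | ∃ s ∈ T, α ≤ (1 / k : ℝ) * ∑ j, Om s j ω}
      = ⋃ s ∈ T, {ω | α ≤ (1 / k : ℝ) * ∑ j, Om s j ω} := by
    ext ω; simp
  rw [hset]
  calc (μ (⋃ s ∈ T, {ω | α ≤ (1 / k : ℝ) * ∑ j, Om s j ω})).toReal
      ≤ (∑ s ∈ T, μ {ω | α ≤ (1 / k : ℝ) * ∑ j, Om s j ω}).toReal := by
        apply ENNReal.toReal_mono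
        · exact (ENNReal.sum_lt_top.2 fun s _ => measure_lt_top μ _).ne
        · exact measure_biUnion_finset_le T _
    _ = ∑ s ∈ T, (μ {ω | α ≤ (1 / k : ℝ) * ∑ j, Om s j ω}).toReal :=
        ENNReal.toReal_sum (fun s _ => (measure_lt_top μ _).ne)
    _ ≤ ∑ _s ∈ T, Real.exp (-α * k) := Finset.sum_le_sum fun s _ => hsingle s
    _ = T.card * Real.exp (-α * k) := by rw [Finset.sum_const, nsmul_eq_mul]
    _ ≤ (Fintype.card Salph : ℝ) ^ n * Real.exp (-α * n ^ 2) := by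
        rw [hk]
        push_cast
        exact mul_le_mul_of_nonneg_right (by exact_mod_cast hT) (Real.exp_pos _).le
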